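/- Let (A, ⇒) be a slanted Heyting algebra on a bounded distributive lattice A, with π-extension ⇒^π on A^δ. Then the pseudo-residuation law holds globally: for all u, v, w ∈ A^δ, w ≤ u ⇒^π v if and only if w ∧ u ≤ ⊤ ⇒^π v. -/

import Mathlib

/-- A subordination algebra relation on a bounded distributive lattice. -/
structure SubordAlg (A : Type*) [DistribLattice A] [BoundedOrder A] where
  prec : A → A → Prop
  prec_bot : prec ⊥ ⊥
  prec_top : prec ⊤ ⊤
  prec_and : ∀ {a b c : A}, prec a b → prec a c → prec a (b ⊓ c)
  prec_or : ∀ {a b c : A}, prec a c → prec b c → prec (a ⊔ b) c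
  prec_wosi : ∀ {a b c d : A}, a ≤ b → prec b c → c ≤ d → prec a d

/-- A presentation of the canonical extension of a bounded (distributive) lattice `A`:
a complete lattice `Aδ` together with a dense and compact lattice embedding. -/
structure CanExt (A : Type*) [DistribLattice A] [BoundedOrder A]
    (Aδ : Type*) [CompleteLattice Aδ] where
  e : A → Aδ
  le_iff : ∀ a b : A, a ≤ b ↔ e a ≤ e b
  map_inf : ∀ a b : A, e (a ⊓ b) = e a ⊓ e b
  map_sup : ∀ a b : A, e (a ⊔ b) = e a ⊔ e b
  map_bot : e ⊥ = ⊥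
  map_top : e ⊤ = ⊤
  dense_closed : ∀ u : Aδ,
    u = sSup {k | (∃ F : Set A, F.Nonempty ∧ k = sInf (e '' F)) ∧ k ≤ u}
  dense_open : ∀ u : Aδ,
    u = sInf {o | (∃ I : Set A, I.Nonempty ∧ o = sSup (e '' I)) ∧ u ≤ o}
  compact : ∀ F I : Set A, F.Nonempty → I.Nonempty →
    sInf (e '' F) ≤ sSup (e '' I) →
    ∃ F' I' : Set A, F' ⊆ F ∧ I' ⊆ I ∧ F'.Finite ∧ I'.Finite ∧
      sInf (e '' F') ≤ sSup (e '' I')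

/-- Closed elements of the canonical extension: meets of nonempty subsets of `A`. -/
def CanExt.IsClosed {A : Type*} [DistribLattice A] [BoundedOrder A]
    {Aδ : Type*} [CompleteLattice Aδ] (C : CanExt A Aδ) (k : Aδ) : Prop :=
  ∃ F : Set A, F.Nonempty ∧ k = sInf (C.e '' F)

/-- Open elements of the canonical extension: joins of nonempty subsets of `A`. -/
def CanExt.IsOpen {A : Type*} [DistribLattice A] [BoundedOrder A]
    {Aδ : Type*} [CompleteLattice Aδ] (C : CanExt A Aδ) (o : Aδ) : Prop :=
  ∃ I : Set A, I.Nonempty ∧ o = sSup (C.e '' I)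

/-- The slanted implication `a ⇒_≺ b := ⋁{c | a ⊓ c ≺ b}` induced by a relation. -/
def slantImp {A : Type*} [DistribLattice A] [BoundedOrder A]
    {Aδ : Type*} [CompleteLattice Aδ] (C : CanExt A Aδ)
    (R : A → A → Prop) (a b : A) : Aδ :=
  sSup (C.e '' {c | R (a ⊓ c) b})

/-- The slanted co-implication `a ⩾_≺ b := ⋀{c | b ≺ a ⊔ c}` induced by a relation. -/
def slantCoimp {A : Type*} [DistribLattice A] [BoundedOrder A]
    {Aδ : Type*} [CompleteLattice Aδ] (C : CanExt A Aδ)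
    (R : A → A → Prop) (a b : A) : Aδ :=
  sInf (C.e '' {c | R b (a ⊔ c)})

/-- The slanted negation `¬a := ⋁{c | a ⊓ c ≺ ⊥}`. -/
def slantNeg {A : Type*} [DistribLattice A] [BoundedOrder A]
    {Aδ : Type*} [CompleteLattice Aδ] (C : CanExt A Aδ)
    (R : A → A → Prop) (a : A) : Aδ :=
  sSup (C.e '' {c | R (a ⊓ c) ⊥})

/-- The slanted co-negation `∼a := ⋀{c | ⊤ ≺ a ⊔ c}`. -/
def slantSim {A : Type*} [DistribLattice A] [BoundedOrder A]
    {Aδ : Type*} [CompleteLattice Aδ] (C : CanExt A Aδ)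
    (R : A → A → Prop) (a : A) : Aδ :=
  sInf (C.e '' {c | R ⊤ (a ⊔ c)})

/-- A slanted Heyting algebra over a canonical extension `C`. -/
structure SlantedHeyting (A : Type*) [DistribLattice A] [BoundedOrder A]
    (Aδ : Type*) [CompleteLattice Aδ] (C : CanExt A Aδ) where
  imp : A → A → Aδ
  imp_open : ∀ a b : A, C.IsOpen (imp a b)
  imp_inf : ∀ a b₁ b₂ : A, imp a (b₁ ⊓ b₂) = imp a b₁ ⊓ imp a b₂
  imp_top : ∀ a : A, imp a ⊤ = ⊤
  sup_imp : ∀ a₁ a₂ b : A, imp (a₁ ⊔ a₂) b = imp a₁ b ⊓ imp a₂ b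
  bot_imp : ∀ b : A, imp ⊥ b = ⊤
  resid : ∀ a b c : A, C.e c ≤ imp a b ↔ C.e (a ⊓ c) ≤ imp ⊤ b

/-- A slanted co-Heyting algebra over a canonical extension `C`. -/
structure SlantedCoHeyting (A : Type*) [DistribLattice A] [BoundedOrder A]
    (Aδ : Type*) [CompleteLattice Aδ] (C : CanExt A Aδ) where
  coimp : A → A → Aδ
  coimp_closed : ∀ a b : A, C.IsClosed (coimp a b)
  coimp_sup : ∀ a b₁ b₂ : A, coimp a (b₁ ⊔ b₂) = coimp a b₁ ⊔ coimp a b₂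
  coimp_bot : ∀ a : A, coimp a ⊥ = ⊥
  inf_coimp : ∀ a₁ a₂ b : A, coimp (a₁ ⊓ a₂) b = coimp a₁ b ⊔ coimp a₂ b
  top_coimp : ∀ b : A, coimp ⊤ b = ⊥
  resid : ∀ a b c : A, coimp a b ≤ C.e c ↔ coimp ⊥ b ≤ C.e (a ⊔ c)

/-- The π-extension of a slanted implication on a closed first argument and open
second argument: `k ⇒^π o := ⋁{a ⇒ b | k ≤ a, b ≤ o}`. -/
def impPiKO {A : Type*} [DistribLattice A] [BoundedOrder A]
    {Aδ : Type*} [CompleteLattice Aδ] {C : CanExt A Aδ}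
    (H : SlantedHeyting A Aδ C) (k o : Aδ) : Aδ :=
  sSup {u | ∃ a b : A, u = H.imp a b ∧ k ≤ C.e a ∧ C.e b ≤ o}

/-- The π-extension of a slanted implication on arbitrary arguments. -/
def impPi {A : Type*} [DistribLattice A] [BoundedOrder A]
    {Aδ : Type*} [CompleteLattice Aδ] {C : CanExt A Aδ}
    (H : SlantedHeyting A Aδ C) (u v : Aδ) : Aδ :=
  sInf {w | ∃ k o : Aδ, C.IsClosed k ∧ C.IsOpen o ∧ k ≤ u ∧ v ≤ o ∧ w = impPiKO H k o}

section Aux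

variable {A : Type*} [DistribLattice A] [BoundedOrder A]
    {Aδ : Type*} [CompleteLattice Aδ] {C : CanExt A Aδ}

lemma CanExt.e_mono (C : CanExt A Aδ) {a b : A} (h : a ≤ b) : C.e a ≤ C.e b :=
  (C.le_iff a b).1 h

lemma CanExt.e_inj (C : CanExt A Aδ) {a b : A} (h : C.e a = C.e b) : a = b :=
  le_antisymm ((C.le_iff a b).2 h.le) ((C.le_iff b a).2 h.ge)

lemma CanExt.closed_top (C : CanExt A Aδ) : C.IsClosed (⊤ : Aδ) :=
  ⟨{⊤}, ⟨⊤, rfl⟩, by simp [C.map_top]⟩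

lemma CanExt.closed_inf (C : CanExt A Aδ) {k k' : Aδ} (hk : C.IsClosed k)
    (hk' : C.IsClosed k') : C.IsClosed (k ⊓ k') := by
  obtain ⟨F, hF, rfl⟩ := hk
  obtain ⟨F', _, rfl⟩ := hk'
  exact ⟨F ∪ F', hF.mono Set.subset_union_left, by rw [Set.image_union, sInf_union]⟩

lemma CanExt.e_finsetInf (C : CanExt A Aδ) (t : Finset A) :
    C.e (t.inf id) = sInf (C.e '' ↑t) := by
  classical
  induction t using Finset.induction_on with
  | empty => simp [C.map_top]
  | @insert a t ha ih =>
      rw [Finset.inf_insert, C.map_inf, ih, Finset.coe_insert, Set.image_insert_eq,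
        sInf_insert, id]

/-- Lemma D: a closed meet below an open splits through `A`. -/
lemma splitCompact {k k' o : Aδ} (hk : C.IsClosed k) (hk' : C.IsClosed k')
    (ho : C.IsOpen o) (h : k ⊓ k' ≤ o) :
    ∃ a c : A, k ≤ C.e a ∧ k' ≤ C.e c ∧ C.e a ⊓ C.e c ≤ o := by
  classical
  obtain ⟨F, hF, rfl⟩ := hk
  obtain ⟨F', hF', rfl⟩ := hk'
  obtain ⟨I, hI, rfl⟩ := ho
  have hunion : sInf (C.e '' (F ∪ F')) ≤ sSup (C.e '' I) := by
    rwa [Set.image_union, sInf_union]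
  obtain ⟨G, J, hGsub, hJsub, hGfin, hJfin, hle⟩ :=
    C.compact (F ∪ F') I (hF.mono Set.subset_union_left) hI hunion
  obtain ⟨f₀, hf₀⟩ := hF
  obtain ⟨f₀', hf₀'⟩ := hF'
  have hG₁fin : (insert f₀ (G ∩ F)).Finite := (hGfin.subset Set.inter_subset_left).insert f₀
  have hG₂fin : (insert f₀' (G \ F)).Finite := (hGfin.subset Set.diff_subset).insert f₀'
  refine ⟨hG₁fin.toFinset.inf id, hG₂fin.toFinset.inf id, ?_, ?_, ?_⟩
  · rw [C.e_finsetInf, hG₁fin.coe_toFinset]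
    exact sInf_le_sInf (Set.image_mono (Set.insert_subset hf₀ Set.inter_subset_right))
  · rw [C.e_finsetInf, hG₂fin.coe_toFinset]
    refine sInf_le_sInf (Set.image_mono (Set.insert_subset hf₀' ?_))
    intro g hg
    rcases hGsub hg.1 with h' | h'
    · exact absurd h' hg.2
    · exact h'
  · rw [C.e_finsetInf, C.e_finsetInf, hG₁fin.coe_toFinset, hG₂fin.coe_toFinset,
      ← sInf_union, ← Set.image_union]
    refine le_trans (sInf_le_sInf (Set.image_mono ?_)) (hle.trans (sSup_le_sSup (Set.image_mono hJsub)))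
    intro g hg
    by_cases hgf : g ∈ F
    · exact Or.inl (Set.mem_insert_iff.2 (Or.inr ⟨hg, hgf⟩))
    · exact Or.inr (Set.mem_insert_iff.2 (Or.inr ⟨hg, hgf⟩))

/-- Compactness for a closed element below an open element. -/
lemma compactKO {k o : Aδ} (hk : C.IsClosed k) (ho : C.IsOpen o) (h : k ≤ o) :
    ∃ a : A, k ≤ C.e a ∧ C.e a ≤ o := by
  obtain ⟨a, c, hka, hc, hinf⟩ := splitCompact hk C.closed_top ho (by simpa using h)
  have : C.e c = ⊤ := top_le_iff.mp hc
  exact ⟨a, hka, by simpa [this] using hinf⟩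

/-- Finite subsets of a nonempty directed set have an upper bound in the set. -/
lemma dirUB {S T : Set Aδ} (hS : S.Nonempty) (hdir : DirectedOn (· ≤ ·) S)
    (hT : T.Finite) (hTS : T ⊆ S) : ∃ s ∈ S, ∀ t ∈ T, t ≤ s := by
  classical
  refine Set.Finite.induction_on (motive := fun T _ => T ⊆ S → ∃ s ∈ S, ∀ t ∈ T, t ≤ s)
    T hT (fun _ => ⟨hS.choose, hS.choose_spec, by simp⟩) ?_ hTS
  intro a T haT hTfin ih hsub
  rw [Set.insert_subset_iff] at hsub
  obtain ⟨s, hsS, hs⟩ := ih hsub.2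
  obtain ⟨z, hzS, haz, hsz⟩ := hdir a hsub.1 s hsS
  refine ⟨z, hzS, ?_⟩
  rintro t (rfl | ht)
  · exact haz
  · exact (hs t ht).trans hsz

/-- A closed element below a directed sup of opens is below one of them. -/
lemma closed_le_dirSSup {k : Aδ} {S : Set Aδ} (hk : C.IsClosed k) (hS : S.Nonempty)
    (hop : ∀ s ∈ S, C.IsOpen s) (hdir : DirectedOn (· ≤ ·) S) (h : k ≤ sSup S) :
    ∃ s ∈ S, k ≤ s := by
  classical
  obtain ⟨F, hF, rfl⟩ := hk
  choose! Is hIsne hIseq using hop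
  obtain ⟨s₀, hs₀⟩ := hS
  set J : Set A := ⋃ s ∈ S, Is s with hJ
  have hSJ : sSup S = sSup (C.e '' J) := by
    apply le_antisymm
    · refine sSup_le fun s hs => ?_
      rw [hIseq s hs]
      exact sSup_le_sSup (Set.image_mono (Set.subset_biUnion_of_mem hs))
    · refine sSup_le ?_
      rintro x ⟨j, hjJ, rfl⟩
      obtain ⟨s, hsS, hjs⟩ : ∃ s ∈ S, j ∈ Is s := by
        simpa [hJ] using hjJ
      calc C.e j ≤ sSup (C.e '' Is s) := le_sSup ⟨j, hjs, rfl⟩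
        _ = s := (hIseq s hsS).symm
        _ ≤ sSup S := le_sSup hsS
  have hJne : J.Nonempty := by
    obtain ⟨j₀, hj₀⟩ := hIsne s₀ hs₀
    exact ⟨j₀, Set.mem_biUnion hs₀ hj₀⟩
  rw [hSJ] at h
  obtain ⟨F'', J'', hF''sub, hJ''sub, hF''fin, hJ''fin, hle⟩ := C.compact F J hF hJne h
  have hkF'' : sInf (C.e '' F) ≤ sInf (C.e '' F'') := sInf_le_sInf (Set.image_mono hF''sub)
  rcases J''.eq_empty_or_nonempty with rfl | hJ''ne
  · refine ⟨s₀, hs₀, ?_⟩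
    simp only [Set.image_empty, sSup_empty] at hle
    exact (hkF''.trans hle).trans bot_le
  · have hmem : ∀ j ∈ J'', ∃ s ∈ S, j ∈ Is s := by
      intro j hj
      have := hJ''sub hj
      simpa [hJ] using this
    choose! sj hsjS hsjmem using hmem
    obtain ⟨s, hsS, hub⟩ := dirUB ⟨s₀, hs₀⟩ hdir (hJ''fin.image sj)
      (by rintro x ⟨j, hj, rfl⟩; exact hsjS j hj)
    refine ⟨s, hsS, hkF''.trans (hle.trans (sSup_le ?_))⟩
    rintro x ⟨j, hj, rfl⟩
    calc C.e j ≤ sSup (C.e '' Is (sj j)) := le_sSup ⟨j, hsjmem j hj, rfl⟩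
      _ = sj j := (hIseq (sj j) (hsjS j hj)).symm
      _ ≤ s := hub _ ⟨j, hj, rfl⟩

variable (H : SlantedHeyting A Aδ C)

lemma imp_mono₂ {a b b' : A} (h : b ≤ b') : H.imp a b ≤ H.imp a b' := by
  have h1 := H.imp_inf a b b'
  rw [inf_eq_left.2 h] at h1
  rw [h1]
  exact inf_le_right

lemma imp_anti₁ {a a' b : A} (h : a ≤ a') : H.imp a' b ≤ H.imp a b := by
  have h1 := H.sup_imp a a' b
  rw [sup_eq_right.2 h] at h1
  rw [h1]
  exact inf_le_left

lemma setKO_nonempty {k o : Aδ} (hk : C.IsClosed k) (ho : C.IsOpen o) :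
    {u | ∃ a b : A, u = H.imp a b ∧ k ≤ C.e a ∧ C.e b ≤ o}.Nonempty := by
  obtain ⟨F, ⟨f₀, hf₀⟩, rfl⟩ := hk
  obtain ⟨I, ⟨i₀, hi₀⟩, rfl⟩ := ho
  exact ⟨H.imp f₀ i₀, f₀, i₀, rfl, sInf_le ⟨f₀, hf₀, rfl⟩, le_sSup ⟨i₀, hi₀, rfl⟩⟩

lemma setKO_open {k o : Aδ} :
    ∀ u ∈ {u | ∃ a b : A, u = H.imp a b ∧ k ≤ C.e a ∧ C.e b ≤ o}, C.IsOpen u := by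
  rintro u ⟨a, b, rfl, -, -⟩
  exact H.imp_open a b

lemma setKO_directed {k o : Aδ} :
    DirectedOn (· ≤ ·) {u | ∃ a b : A, u = H.imp a b ∧ k ≤ C.e a ∧ C.e b ≤ o} := by
  rintro u ⟨a₁, b₁, rfl, hka₁, hb₁⟩ u' ⟨a₂, b₂, rfl, hka₂, hb₂⟩
  refine ⟨H.imp (a₁ ⊓ a₂) (b₁ ⊔ b₂), ⟨a₁ ⊓ a₂, b₁ ⊔ b₂, rfl, ?_, ?_⟩, ?_, ?_⟩
  · rw [C.map_inf]; exact le_inf hka₁ hka₂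
  · rw [C.map_sup]; exact sup_le hb₁ hb₂
  · exact (imp_anti₁ H inf_le_left).trans (imp_mono₂ H le_sup_left)
  · exact (imp_anti₁ H inf_le_right).trans (imp_mono₂ H le_sup_right)

/-- The key residuation lemma at closed/open level. -/
lemma key {k k' o : Aδ} (hk : C.IsClosed k) (hk' : C.IsClosed k') (ho : C.IsOpen o) :
    k' ≤ impPiKO H k o ↔ k ⊓ k' ≤ impPiKO H ⊤ o := by
  constructor
  · intro h
    obtain ⟨u, hu, hk'u⟩ := closed_le_dirSSup hk' (setKO_nonempty H hk ho)
      (setKO_open H) (setKO_directed H) h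
    obtain ⟨a, b, rfl, hka, hbo⟩ := hu
    obtain ⟨c, hk'c, hc⟩ := compactKO hk' (H.imp_open a b) hk'u
    have hres : C.e (a ⊓ c) ≤ H.imp ⊤ b := (H.resid a b c).1 hc
    calc k ⊓ k' ≤ C.e a ⊓ C.e c := inf_le_inf hka hk'c
      _ = C.e (a ⊓ c) := (C.map_inf a c).symm
      _ ≤ H.imp ⊤ b := hres
      _ ≤ impPiKO H ⊤ o := le_sSup ⟨⊤, b, rfl, by rw [C.map_top], hbo⟩
  · intro h
    obtain ⟨u, hu, hle⟩ := closed_le_dirSSup (C.closed_inf hk hk')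
      (setKO_nonempty H C.closed_top ho) (setKO_open H) (setKO_directed H) h
    obtain ⟨a, b, rfl, hta, hbo⟩ := hu
    have ha : a = ⊤ := C.e_inj (by rw [C.map_top]; exact le_antisymm le_top hta)
    subst ha
    obtain ⟨a', c, hka', hk'c, hinf⟩ := splitCompact hk hk' (H.imp_open ⊤ b) hle
    rw [← C.map_inf] at hinf
    have hres : C.e c ≤ H.imp a' b := (H.resid a' b c).2 hinf
    calc k' ≤ C.e c := hk'c
      _ ≤ H.imp a' b := hres
      _ ≤ impPiKO H k o := le_sSup ⟨a', b, rfl, hka', hbo⟩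

end Aux

theorem stmt9 {A : Type*} [DistribLattice A] [BoundedOrder A]
    {Aδ : Type*} [CompleteLattice Aδ] {C : CanExt A Aδ}
    (H : SlantedHeyting A Aδ C) :
    ∀ u v w : Aδ, w ≤ impPi H u v ↔ w ⊓ u ≤ impPi H ⊤ v := by
  intro u v w
  constructor
  · intro h
    refine le_sInf ?_
    rintro x ⟨k₀, o, hk₀, ho, -, hvo, rfl⟩
    have hsub : impPiKO H ⊤ o ≤ impPiKO H k₀ o := by
      refine sSup_le_sSup ?_
      rintro x ⟨a, b, rfl, hta, hbo⟩
      exact ⟨a, b, rfl, le_top.trans hta, hbo⟩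
    refine le_trans ?_ hsub
    calc w ⊓ u = sSup {k | (∃ F : Set A, F.Nonempty ∧ k = sInf (C.e '' F)) ∧ k ≤ w ⊓ u} :=
          C.dense_closed (w ⊓ u)
      _ ≤ impPiKO H ⊤ o := by
          refine sSup_le ?_
          rintro c ⟨hc, hcwu⟩
          have hcw : c ≤ w := hcwu.trans inf_le_left
          have hcu : c ≤ u := hcwu.trans inf_le_right
          have h1 : c ≤ impPiKO H c o :=
            (hcw.trans h).trans (sInf_le ⟨c, o, hc, ho, hcu, hvo, rfl⟩)
          have h2 := (key H hc hc ho).1 h1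
          simpa using h2
  · intro h
    refine le_sInf ?_
    rintro x ⟨k, o, hk, ho, hku, hvo, rfl⟩
    calc w = sSup {k' | (∃ F : Set A, F.Nonempty ∧ k' = sInf (C.e '' F)) ∧ k' ≤ w} :=
          C.dense_closed w
      _ ≤ impPiKO H k o := by
          refine sSup_le ?_
          rintro k' ⟨hk', hk'w⟩
          have h1 : k ⊓ k' ≤ impPiKO H ⊤ o := by
            have h2 : k ⊓ k' ≤ w ⊓ u := le_inf (inf_le_right.trans hk'w) (inf_le_left.trans hku)
            exact h2.trans (h.trans (sInf_le ⟨⊤, o, C.closed_top, ho, le_top, hvo, rfl⟩))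
          exact (key H hk hk' ho).2 h1
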